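/- arXiv:1605.08348 — 3 statements merged into one kernel-verified Lean document; each statement's English description precedes it below -/
import Mathlib

section
/- Let H be a complex Hilbert space and let P, Q : H → H be orthogonal projections, i.e. continuous linear maps satisfying P∘P = P, Q∘Q = Q, and P, Q self-adjoint (⟪P x, y⟫ = ⟪x, P y⟫ and ⟪Q x, y⟫ = ⟪x, Q y⟫ for all x, y ∈ H). If ‖P − Q‖ ≤ 1/4 in operator norm, then ‖P − Q‖ ≤ 4·‖(1 − P)∘Q‖. -/
open scoped InnerProductSpace

section aux
variable {H : Type*} [NormedAddCommGroup H] [InnerProductSpace ℂ H]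

/-- If `B` acts as a formal adjoint of `A`, then `‖A‖ ≤ ‖B‖`. -/
lemma aux_norm_le_of_formal_adjoint (A B : H →L[ℂ] H)
    (h : ∀ x y : H, ⟪A x, y⟫_ℂ = ⟪x, B y⟫_ℂ) : ‖A‖ ≤ ‖B‖ := by
  refine A.opNorm_le_bound (norm_nonneg B) fun x => ?_
  have h1 : (‖A x‖ : ℝ) ^ 2 = Complex.re ⟪A x, A x⟫_ℂ :=
    (inner_self_eq_norm_sq (𝕜 := ℂ) (A x)).symm
  have h2 : Complex.re ⟪A x, A x⟫_ℂ ≤ ‖x‖ * (‖B‖ * ‖A x‖) := by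
    rw [h x (A x)]
    calc Complex.re ⟪x, B (A x)⟫_ℂ ≤ ‖⟪x, B (A x)⟫_ℂ‖ := Complex.re_le_norm _
      _ ≤ ‖x‖ * ‖B (A x)‖ := norm_inner_le_norm _ _
      _ ≤ ‖x‖ * (‖B‖ * ‖A x‖) :=
          mul_le_mul_of_nonneg_left (B.le_opNorm _) (norm_nonneg x)
  have h3 : ‖A x‖ ^ 2 ≤ ‖x‖ * (‖B‖ * ‖A x‖) := h1 ▸ h2
  rcases eq_or_lt_of_le (norm_nonneg (A x)) with h0 | h0
  · rw [← h0]; positivity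
  · nlinarith [norm_nonneg x, norm_nonneg B]

/-- A self-adjoint idempotent has operator norm at most 1. -/
lemma aux_norm_idem_le_one (T : H →L[ℂ] H) (hT : T ∘L T = T)
    (hTsa : ∀ x y : H, ⟪T x, y⟫_ℂ = ⟪x, T y⟫_ℂ) : ‖T‖ ≤ 1 := by
  refine T.opNorm_le_bound zero_le_one fun x => ?_
  have hTTx : T (T x) = T x := congrFun (congrArg DFunLike.coe hT) x
  have h1 : (‖T x‖ : ℝ) ^ 2 = Complex.re ⟪T x, T x⟫_ℂ :=
    (inner_self_eq_norm_sq (𝕜 := ℂ) (T x)).symm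
  have h2 : ⟪T x, T x⟫_ℂ = ⟪x, T x⟫_ℂ := by rw [hTsa x (T x), hTTx]
  have h3 : Complex.re ⟪x, T x⟫_ℂ ≤ ‖x‖ * ‖T x‖ := by
    calc Complex.re ⟪x, T x⟫_ℂ ≤ ‖⟪x, T x⟫_ℂ‖ := Complex.re_le_norm _
      _ ≤ ‖x‖ * ‖T x‖ := norm_inner_le_norm _ _
  have h4 : ‖T x‖ ^ 2 ≤ ‖x‖ * ‖T x‖ := by rw [h1, h2]; exact h3
  rcases eq_or_lt_of_le (norm_nonneg (T x)) with h0 | h0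
  · rw [← h0]; positivity
  · nlinarith [norm_nonneg x]

end aux

/-- Lemma 3.1: for orthogonal projections `P, Q` on a complex Hilbert space with
`‖P − Q‖ ≤ 1/4`, one has `‖P − Q‖ ≤ 4 ‖(1 − P) Q‖`. -/
theorem norm_proj_diff_le_four_mul {H : Type*} [NormedAddCommGroup H]
    [InnerProductSpace ℂ H] (P Q : H →L[ℂ] H)
    (hP : P ∘L P = P) (hQ : Q ∘L Q = Q)
    (hPsa : ∀ x y : H, ⟪P x, y⟫_ℂ = ⟪x, P y⟫_ℂ)
    (hQsa : ∀ x y : H, ⟪Q x, y⟫_ℂ = ⟪x, Q y⟫_ℂ)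
    (hnorm : ‖P - Q‖ ≤ 1 / 4) :
    ‖P - Q‖ ≤ 4 * ‖(1 - P) ∘L Q‖ := by
  have hPm : P * P = P := hP
  have hQm : Q * Q = Q := hQ
  have hp' : ∀ r : H →L[ℂ] H, P*(P*r) = P*r := fun r => by rw [← mul_assoc, hPm]
  have hq' : ∀ r : H →L[ℂ] H, Q*(Q*r) = Q*r := fun r => by rw [← mul_assoc, hQm]
  -- the key algebraic identity for idempotents
  have key : Q - P = (Q-P)*(Q-P)*(1-2*P) + P*(Q-P)*(1-P) + (1-P)*(Q-P)*P := by
    simp only [two_mul, mul_add, add_mul, mul_sub, sub_mul, mul_one, one_mul,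
      mul_assoc, hPm, hQm, hp', hq']
    abel
  -- simplifications of the middle and last terms
  have ht2 : P*(Q-P)*(1-P) = P*(Q*(1-P)) := by
    simp only [mul_sub, sub_mul, mul_one, one_mul, mul_assoc, hPm, hQm, hp', hq']
    abel
  have ht3 : (1-P)*(Q-P)*P = ((1-P)*Q)*P := by
    simp only [mul_sub, sub_mul, mul_one, one_mul, mul_assoc, hPm, hQm, hp', hq']
    abel
  -- ‖1 - 2P‖ ≤ 1 : it is a pointwise isometry
  have hiso : ∀ x : H, ‖(1 - 2*P) x‖ = ‖x‖ := by
    intro x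
    have hPPx : P (P x) = P x := congrFun (congrArg DFunLike.coe hP) x
    have hux : (1 - 2*P) x = x - (P x + P x) := by
      simp [two_mul, ContinuousLinearMap.sub_apply, ContinuousLinearMap.add_apply,
        ContinuousLinearMap.mul_apply]
    have h1 : ⟪P x, P x⟫_ℂ = ⟪x, P x⟫_ℂ := by rw [hPsa x (P x), hPPx]
    have h2 : ⟪P x, x⟫_ℂ = ⟪x, P x⟫_ℂ := hPsa x x
    have hinner : ⟪x - (P x + P x), x - (P x + P x)⟫_ℂ = ⟪x, x⟫_ℂ := by
      simp only [inner_sub_left, inner_sub_right, inner_add_left, inner_add_right]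
      linear_combination 4 * h1 - 2 * h2
    have hre : RCLike.re ⟪x - (P x + P x), x - (P x + P x)⟫_ℂ
        = RCLike.re ⟪x, x⟫_ℂ := by rw [hinner]
    rw [inner_self_eq_norm_sq (𝕜 := ℂ), inner_self_eq_norm_sq (𝕜 := ℂ)] at hre
    rw [hux]
    nlinarith [norm_nonneg (x - (P x + P x)), norm_nonneg x, hre]
  have hrefl : ‖(1 : H →L[ℂ] H) - 2*P‖ ≤ 1 :=
    ContinuousLinearMap.opNorm_le_bound _ zero_le_one fun x => by
      rw [hiso x, one_mul]
  -- ‖P‖ ≤ 1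
  have hPn : ‖P‖ ≤ 1 := aux_norm_idem_le_one P hP hPsa
  -- ‖Q(1-P)‖ ≤ ‖(1-P)Q‖
  have hadj : ‖Q*(1-P)‖ ≤ ‖(1-P)*Q‖ := by
    refine aux_norm_le_of_formal_adjoint _ _ fun x y => ?_
    simp only [ContinuousLinearMap.mul_apply, ContinuousLinearMap.sub_apply,
      ContinuousLinearMap.one_apply, inner_sub_left, inner_sub_right, map_sub]
    rw [hQsa, hQsa, hPsa]
  set N := ‖(1-P)*Q‖ with hN
  have hNnn : 0 ≤ N := norm_nonneg _
  have hd : ‖Q - P‖ = ‖P - Q‖ := norm_sub_rev Q P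
  -- bound the three terms
  have b1 : ‖(Q-P)*(Q-P)*(1-2*P)‖ ≤ (1/4) * ‖P - Q‖ := by
    calc ‖(Q-P)*(Q-P)*(1-2*P)‖ ≤ ‖(Q-P)*(Q-P)‖ * ‖(1:H →L[ℂ] H)-2*P‖ := norm_mul_le _ _
      _ ≤ ‖(Q-P)*(Q-P)‖ * 1 := by
          exact mul_le_mul_of_nonneg_left hrefl (norm_nonneg _)
      _ = ‖(Q-P)*(Q-P)‖ := mul_one _
      _ ≤ ‖Q-P‖ * ‖Q-P‖ := norm_mul_le _ _
      _ = ‖P-Q‖ * ‖P-Q‖ := by rw [hd]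
      _ ≤ (1/4) * ‖P - Q‖ := mul_le_mul_of_nonneg_right hnorm (norm_nonneg _)
  have b2 : ‖P*(Q-P)*(1-P)‖ ≤ N := by
    rw [ht2]
    calc ‖P*(Q*(1-P))‖ ≤ ‖P‖ * ‖Q*(1-P)‖ := norm_mul_le _ _
      _ ≤ 1 * N := mul_le_mul hPn hadj (norm_nonneg _) zero_le_one
      _ = N := one_mul N
  have b3 : ‖(1-P)*(Q-P)*P‖ ≤ N := by
    rw [ht3]
    calc ‖((1-P)*Q)*P‖ ≤ ‖(1-P)*Q‖ * ‖P‖ := norm_mul_le _ _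
      _ ≤ N * 1 := mul_le_mul_of_nonneg_left hPn hNnn
      _ = N := mul_one N
  have main : ‖Q - P‖ ≤ (1/4) * ‖P - Q‖ + N + N := by
    calc ‖Q - P‖ = ‖(Q-P)*(Q-P)*(1-2*P) + P*(Q-P)*(1-P) + (1-P)*(Q-P)*P‖ := by rw [← key]
      _ ≤ ‖(Q-P)*(Q-P)*(1-2*P) + P*(Q-P)*(1-P)‖ + ‖(1-P)*(Q-P)*P‖ := norm_add_le _ _
      _ ≤ ‖(Q-P)*(Q-P)*(1-2*P)‖ + ‖P*(Q-P)*(1-P)‖ + ‖(1-P)*(Q-P)*P‖ := by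
          exact add_le_add (norm_add_le _ _) le_rfl
      _ ≤ (1/4) * ‖P - Q‖ + N + N := by
          exact add_le_add (add_le_add b1 b2) b3
  rw [hd] at main
  have : ‖(1 - P) ∘L Q‖ = N := rfl
  rw [this]
  linarith
end

section
/- Let H be a complex Hilbert space, let S, σ : H → H be continuous linear maps with S self-adjoint, S∘S = 1 (the identity), and S∘σ = −σ∘S, and let P : H → H be an orthogonal projection (continuous linear, idempotent, self-adjoint) whose range has finite dimension equal to 1 and which commutes with S: S∘P = P∘S. Then P∘σ∘P = 0. -/
open scoped InnerProductSpace

/-- Lemma 2.9 (abstract form): a rank-one orthogonal projection `P` commuting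
with a self-adjoint involution `S` that anticommutes with `σ` satisfies
`P σ P = 0`. -/
theorem rankOne_proj_conj_anticommuting_eq_zero {H : Type*} [NormedAddCommGroup H]
    [InnerProductSpace ℂ H] (S σ P : H →L[ℂ] H)
    (hSsa : ∀ x y : H, ⟪S x, y⟫_ℂ = ⟪x, S y⟫_ℂ)
    (hS2 : S ∘L S = 1)
    (hanti : S ∘L σ = -(σ ∘L S))
    (hP : P ∘L P = P)
    (hPsa : ∀ x y : H, ⟪P x, y⟫_ℂ = ⟪x, P y⟫_ℂ)
    (hrank : Module.finrank ℂ (LinearMap.range (P : H →ₗ[ℂ] H)) = 1)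
    (hcomm : S ∘L P = P ∘L S) :
    P ∘L σ ∘L P = 0 := by
  -- pointwise versions
  have hP' : ∀ x, P (P x) = P x := fun x => congrFun (congrArg DFunLike.coe hP) x
  have hS2' : ∀ x, S (S x) = x := fun x => congrFun (congrArg DFunLike.coe hS2) x
  have hanti' : ∀ x, S (σ x) = -(σ (S x)) := fun x =>
    congrFun (congrArg DFunLike.coe hanti) x
  have hcomm' : ∀ x, S (P x) = P (S x) := fun x =>
    congrFun (congrArg DFunLike.coe hcomm) x
  -- get a generator of the range
  obtain ⟨⟨v, hvmem⟩, hv0, hgen⟩ := (finrank_eq_one_iff').mp hrank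
  have hv0' : v ≠ 0 := fun h => hv0 (Subtype.ext h)
  -- P fixes elements of its range
  have hfix : ∀ w ∈ LinearMap.range (P : H →ₗ[ℂ] H), P w = w := by
    rintro w ⟨u, rfl⟩
    exact hP' u
  have hPv : P v = v := hfix v hvmem
  -- any element of range is a multiple of v
  have hmul : ∀ w ∈ LinearMap.range (P : H →ₗ[ℂ] H), ∃ c : ℂ, c • v = w := by
    intro w hw
    obtain ⟨c, hc⟩ := hgen ⟨w, hw⟩
    exact ⟨c, congrArg Subtype.val hc⟩
  -- S v is in range P, hence S v = c • v
  have hSvmem : S v ∈ LinearMap.range (P : H →ₗ[ℂ] H) := ⟨S v, by rw [ContinuousLinearMap.coe_coe, ← hcomm' v, hPv]⟩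
  obtain ⟨c, hc⟩ := hmul (S v) hSvmem
  -- c^2 = 1
  have hc2 : c * c = 1 := by
    have h1 : (c * c) • v = v := by
      have : S (S v) = v := hS2' v
      rw [← hc, map_smul, ← hc, smul_smul] at this
      exact this
    have h2 : (c * c - 1) • v = 0 := by rw [sub_smul, one_smul, h1, sub_self]
    have := (smul_eq_zero.mp h2).resolve_right hv0'
    linear_combination this
  -- ⟪v, σ v⟫ = 0
  have hinner : ⟪v, σ v⟫_ℂ = 0 := by
    have key : ⟪v, σ v⟫_ℂ = -((starRingEnd ℂ c) * c * ⟪v, σ v⟫_ℂ) := by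
      calc ⟪v, σ v⟫_ℂ = ⟪v, S (S (σ v))⟫_ℂ := by rw [hS2']
        _ = ⟪S v, S (σ v)⟫_ℂ := (hSsa _ _).symm
        _ = ⟪c • v, -(σ (S v))⟫_ℂ := by rw [hc, hanti']
        _ = ⟪c • v, -(σ (c • v))⟫_ℂ := by rw [hc]
        _ = -((starRingEnd ℂ c) * c * ⟪v, σ v⟫_ℂ) := by
            rw [map_smul, inner_neg_right, inner_smul_left, inner_smul_right]
            ring
    rcases mul_self_eq_one_iff.mp hc2 with rfl | rfl <;>
      · simp only [map_one, one_mul, map_neg, neg_mul, neg_neg, mul_one] at key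
        exact CharZero.eq_neg_self_iff.mp key
  -- P (σ v) = 0
  have hPσv : P (σ v) = 0 := by
    obtain ⟨d, hd⟩ := hmul (P (σ v)) ⟨σ v, rfl⟩
    have h1 : ⟪v, P (σ v)⟫_ℂ = 0 := by rw [← hPsa, hPv, hinner]
    rw [← hd, inner_smul_right] at h1
    have hvv : ⟪v, v⟫_ℂ ≠ 0 := fun h => hv0' (inner_self_eq_zero.mp h)
    have hd0 : d = 0 := by
      rcases mul_eq_zero.mp h1 with h | h
      · exact h
      · exact absurd h hvv
    rw [← hd, hd0, zero_smul]
  -- conclude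
  ext x
  obtain ⟨e, he⟩ := hmul (P x) ⟨x, rfl⟩
  simp only [ContinuousLinearMap.comp_apply, ContinuousLinearMap.zero_apply]
  rw [← he, map_smul, map_smul, hPσv, smul_zero]
end

section
/- Let κ, γ, g be real numbers with 0 < κ, 0 < γ < 1/2, and 0 < g < γ/4, and set ρₙ = κ·γⁿ for n ∈ ℕ. Let a : ℕ → ℝ be a sequence satisfying a₀ ≥ κ and, for every n ∈ ℕ, a_{n+1} ≥ min(aₙ, (1 − g)·ρ_{n+1}) − g·ρₙ. Then aₙ ≥ ρₙ/2 for every n ∈ ℕ. -/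
/-- Proposition 2.6 (gap induction): if `a 0 ≥ κ` and
`a (n+1) ≥ min (a n) ((1 − g) ρ_{n+1}) − g ρ n` with `ρ n = κ γ ^ n`,
`0 < γ < 1/2`, `0 < g < γ/4`, then `a n ≥ ρ n / 2` for all `n`. -/
theorem gap_induction (κ γ g : ℝ) (hκ : 0 < κ) (hγ0 : 0 < γ) (hγ : γ < 1 / 2)
    (hg0 : 0 < g) (hg : g < γ / 4) (a : ℕ → ℝ)
    (h0 : a 0 ≥ κ)
    (hrec : ∀ n : ℕ, a (n + 1) ≥ min (a n) ((1 - g) * (κ * γ ^ (n + 1))) - g * (κ * γ ^ n)) :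
    ∀ n : ℕ, a n ≥ κ * γ ^ n / 2 := by
  intro n
  induction n with
  | zero => simpa using le_trans (by linarith) h0
  | succ n ih =>
    have hρ : 0 < κ * γ ^ n := by positivity
    have hmin : min (a n) ((1 - g) * (κ * γ ^ (n + 1))) ≥ (1 - g) * γ * (κ * γ ^ n) := by
      apply le_min
      · have : (1 - g) * γ * (κ * γ ^ n) ≤ κ * γ ^ n / 2 := by nlinarith [mul_pos hg0 hρ, mul_pos (mul_pos hg0 hγ0) hρ, mul_lt_mul_of_pos_right hγ hρ]
        linarith
      · rw [pow_succ]; ring_nf; rfl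
    have := hrec n
    have hgoal : (1 - g) * γ * (κ * γ ^ n) - g * (κ * γ ^ n) ≥ κ * γ ^ (n + 1) / 2 := by
      rw [pow_succ]
      have h1 : g * (1 + γ) * (κ * γ ^ n) < (γ / 4) * (1 + γ) * (κ * γ ^ n) := by
        have : (0:ℝ) < (1 + γ) * (κ * γ ^ n) := by positivity
        nlinarith
      nlinarith [mul_pos hγ0 hρ]
    linarith
end
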